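/- Let μ and ν be Borel probability measures on ℝ with finite moments of all orders, let (Pₙ) be a monic orthogonal polynomial system for μ with Jacobi parameters (βₙ)ₙ≥0, (γₙ)ₙ≥1 with all γₙ > 0, and let (Qₙ) be a monic orthogonal polynomial system for ν with Jacobi parameters (β′ₙ)ₙ≥0, (γ′ₙ)ₙ≥1 with all γ′ₙ > 0. Then the following are equivalent: (i) β₀ = 0, γ₁ = 1, βₙ = β′_{n−1} for all n ≥ 1, and γₙ = γ′_{n−1} for all n ≥ 2 (the Jacobi parameter sequences of μ are those of ν with 0 and 1 prepended); (ii) in the ring ℝ[[z]] of formal power series, (1 + Σ_{n≥1} (∫xⁿ dμ)·zⁿ) · (1 − z²·(1 + Σ_{n≥1} (∫xⁿ dν)·zⁿ)) = 1. -/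

import Mathlib

open MeasureTheory Polynomial

/-- A monic orthogonal polynomial system for `μ` with Jacobi parameters
`(βₙ)ₙ≥0`, `(γₙ)ₙ≥1`: monic polynomials `Pₙ` with `deg Pₙ = n`, `P₀ = 1`,
satisfying `x·Pₙ = Pₙ₊₁ + βₙ Pₙ + γₙ Pₙ₋₁` (with `P₋₁ = 0`) and
`∫ Pₙ Pₘ dμ = 0` for `n ≠ m`. -/
def IsMOPS (μ : Measure ℝ) (P : ℕ → Polynomial ℝ) (β γ : ℕ → ℝ) : Prop :=
  P 0 = 1 ∧ (∀ n, (P n).Monic) ∧ (∀ n, (P n).natDegree = n) ∧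
    (X * P 0 = P 1 + C (β 0) * P 0) ∧
    (∀ n, 1 ≤ n → X * P n = P (n + 1) + C (β n) * P n + C (γ n) * P (n - 1)) ∧
    (∀ n m, n ≠ m → ∫ x, (P n).eval x * (P m).eval x ∂μ = 0)

/-- The moment generating function `1 + Σ_{n≥1} (∫ xⁿ dμ) zⁿ` of a probability measure. -/
noncomputable def momentSeries (μ : Measure ℝ) : PowerSeries ℝ :=
  PowerSeries.mk fun n => ∫ x, x ^ n ∂μ



noncomputable def cmat (b g : ℕ → ℝ) : ℕ → ℕ → ℝ
  | 0, k => if k = 0 then 1 else 0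
  | n+1, k => (if k = 0 then 0 else cmat b g n (k-1)) + b k * cmat b g n k
      + g (k+1) * cmat b g n (k+1)

lemma cmat_zero (b g : ℕ → ℝ) (k : ℕ) : cmat b g 0 k = if k = 0 then 1 else 0 := rfl

lemma cmat_succ (b g : ℕ → ℝ) (n k : ℕ) :
    cmat b g (n+1) k = (if k = 0 then 0 else cmat b g n (k-1)) + b k * cmat b g n k
      + g (k+1) * cmat b g n (k+1) := rfl

lemma cmat_eq_zero (b g : ℕ → ℝ) : ∀ n k, n < k → cmat b g n k = 0 := by
  intro n
  induction n with
  | zero => intro k hk; rw [cmat_zero, if_neg (by omega)]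
  | succ n ih =>
    intro k hk
    rw [cmat_succ]
    have hk0 : k ≠ 0 := by omega
    rw [if_neg hk0, ih (k-1) (by omega), ih k (by omega), ih (k+1) (by omega)]
    ring

lemma cmat_diag (b g : ℕ → ℝ) : ∀ n, cmat b g n n = 1 := by
  intro n
  induction n with
  | zero => simp [cmat_zero]
  | succ n ih =>
    rw [cmat_succ, if_neg (Nat.succ_ne_zero n), Nat.add_sub_cancel, ih,
      cmat_eq_zero b g n (n+1) (by omega), cmat_eq_zero b g n (n+2) (by omega)]
    ring

lemma cmat_shift (b g b' g' : ℕ → ℝ) (hb0 : b 0 = 0) (hg1 : g 1 = 1)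
    (hb : ∀ n, b (n+1) = b' n) (hg : ∀ n, g (n+2) = g' (n+1)) :
    ∀ n k, cmat b g n (k+1)
      = ∑ j ∈ Finset.range n, cmat b' g' j k * cmat b g (n-1-j) 0 := by
  intro n
  induction n with
  | zero => intro k; simp [cmat_zero]
  | succ n ih =>
    intro k
    rw [cmat_succ, if_neg (Nat.succ_ne_zero k), Nat.add_sub_cancel]
    rw [Finset.sum_range_succ']
    have h1 : ∀ j ∈ Finset.range n,
        cmat b' g' (j+1) k * cmat b g (n+1-1-(j+1)) 0
        = (if k = 0 then 0 else cmat b' g' j (k-1)) * cmat b g (n-1-j) 0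
          + b' k * (cmat b' g' j k * cmat b g (n-1-j) 0)
          + g' (k+1) * (cmat b' g' j (k+1) * cmat b g (n-1-j) 0) := by
      intro j hj
      have : n+1-1-(j+1) = n-1-j := by omega
      rw [this, cmat_succ]
      ring
    rw [Finset.sum_congr rfl h1]
    simp only [Finset.sum_add_distrib, ← Finset.mul_sum]
    rw [← ih k, ← ih (k+1)]
    have h0 : cmat b' g' 0 k * cmat b g (n+1-1-0) 0 = (if k = 0 then 1 else 0) * cmat b g n 0 := by
      rw [cmat_zero]; norm_num
    rw [h0, hb k, hg k]
    by_cases hk0 : k = 0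
    · subst hk0
      simp
      ring
    · simp only [if_neg hk0]
      have : cmat b g n k = ∑ j ∈ Finset.range n, cmat b' g' j (k-1) * cmat b g (n-1-j) 0 := by
        have h2 := ih (k-1)
        rwa [show k - 1 + 1 = k by omega] at h2
      rw [this]
      ring


lemma forward_series (b g b' g' : ℕ → ℝ) (hb0 : b 0 = 0) (hg1 : g 1 = 1)
    (hb : ∀ n, b (n+1) = b' n) (hg : ∀ n, g (n+2) = g' (n+1)) :
    PowerSeries.mk (fun n => cmat b g n 0) *
      (1 - PowerSeries.X ^ 2 * PowerSeries.mk (fun n => cmat b' g' n 0)) = 1 := by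
  set M := PowerSeries.mk (fun n => cmat b g n 0) with hM
  set M' := PowerSeries.mk (fun n => cmat b' g' n 0) with hM'
  have key : M = 1 + PowerSeries.X ^ 2 * (M' * M) := by
    ext n
    rw [map_add, hM, PowerSeries.coeff_mk]
    match n with
    | 0 => simp [cmat_zero]
    | 1 =>
      rw [PowerSeries.coeff_X_pow_mul']
      norm_num
      rw [cmat_succ, cmat_zero, cmat_zero, hb0]
      norm_num
    | (n+2) =>
      have h2 : (PowerSeries.coeff (n+2)) (PowerSeries.X ^ 2 * (M' * M))
          = PowerSeries.coeff n (M' * M) := PowerSeries.coeff_X_pow_mul _ 2 n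
      rw [h2, PowerSeries.coeff_mul, Finset.Nat.sum_antidiagonal_eq_sum_range_succ_mk]
      have h3 : (PowerSeries.coeff (n+2)) (1 : PowerSeries ℝ) = 0 := by
        rw [PowerSeries.coeff_one]; norm_num
    -- cmat recursion
      have h4 : cmat b g (n+2) 0 = cmat b g (n+1) 1 := by
        rw [cmat_succ, hb0, hg1]; norm_num
      rw [h3, h4, cmat_shift b g b' g' hb0 hg1 hb hg (n+1) 0]
      rw [zero_add]
      apply Finset.sum_congr rfl
      intro j hj
      rw [hM, hM', PowerSeries.coeff_mk, PowerSeries.coeff_mk]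
      congr 2
  linear_combination key

lemma integrable_eval (μ : Measure ℝ) (hmom : ∀ n : ℕ, Integrable (fun x => x ^ n) μ)
    (p : Polynomial ℝ) : Integrable (fun x => p.eval x) μ := by
  have h : (fun x => p.eval x)
      = fun x => ∑ i ∈ Finset.range (p.natDegree + 1), p.coeff i * x ^ i := by
    funext x; exact eval_eq_sum_range x
  rw [h]
  exact integrable_finset_sum _ (fun i _ => (hmom i).const_mul _)

lemma pow_expansion (P : ℕ → Polynomial ℝ) (b g : ℕ → ℝ)
    (h0 : P 0 = 1) (hr0 : X * P 0 = P 1 + C (b 0) * P 0)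
    (hr : ∀ n, 1 ≤ n → X * P n = P (n + 1) + C (b n) * P n + C (g n) * P (n - 1)) :
    ∀ n x, x ^ n = ∑ k ∈ Finset.range (n+1), cmat b g n k * (P k).eval x := by
  have hev : ∀ k x, x * (P k).eval x = (P (k+1)).eval x + b k * (P k).eval x
      + (if k = 0 then 0 else g k * (P (k-1)).eval x) := by
    intro k x
    rcases k with _ | k
    · have h := congrArg (fun p => Polynomial.eval x p) hr0
      simp only [eval_mul, eval_add, eval_X, eval_C] at h
      rw [if_pos rfl, add_zero]
      exact h
    · have h := congrArg (fun p => Polynomial.eval x p) (hr (k+1) (by omega))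
      simp only [eval_mul, eval_add, eval_X, eval_C] at h
      rw [if_neg (Nat.succ_ne_zero k)]
      simpa using h
  intro n
  induction n with
  | zero => intro x; simp [cmat_zero, h0]
  | succ n ih =>
    intro x
    have hx : x ^ (n+1) = x * x ^ n := by ring
    rw [hx, ih x, Finset.mul_sum]
    have hterm : ∀ k ∈ Finset.range (n+1),
        x * (cmat b g n k * (P k).eval x)
        = cmat b g n k * (P (k+1)).eval x
          + b k * cmat b g n k * (P k).eval x
          + (if k = 0 then 0 else cmat b g n k * (g k * (P (k-1)).eval x)) := by
      intro k _
      have : x * (cmat b g n k * (P k).eval x) = cmat b g n k * (x * (P k).eval x) := by ring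
      rw [this, hev k x]
      by_cases hk : k = 0
      · simp only [if_pos hk]; ring
      · simp only [if_neg hk]; ring
    rw [Finset.sum_congr rfl hterm, Finset.sum_add_distrib, Finset.sum_add_distrib]
    have hT : ∀ k ∈ Finset.range (n+2),
        cmat b g (n+1) k * (P k).eval x
        = (if k = 0 then 0 else cmat b g n (k-1) * (P k).eval x)
          + b k * cmat b g n k * (P k).eval x
          + g (k+1) * cmat b g n (k+1) * (P k).eval x := by
      intro k _
      rw [cmat_succ]
      by_cases hk : k = 0
      · simp only [if_pos hk]; ring
      · simp only [if_neg hk]; ring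
    rw [Finset.sum_congr rfl hT, Finset.sum_add_distrib, Finset.sum_add_distrib]
    congr 1
    · congr 1
      · -- E1
        conv_rhs => rw [Finset.sum_range_succ']
        simp
      · -- E2
        conv_rhs => rw [Finset.sum_range_succ]
        rw [cmat_eq_zero b g n (n+1) (by omega)]
        simp
    · -- E3
      rw [Finset.sum_range_succ']
      conv_rhs => rw [Finset.sum_range_succ, Finset.sum_range_succ]
      rw [cmat_eq_zero b g n (n+1) (by omega), cmat_eq_zero b g n (n+2) (by omega)]
      simp only [Nat.succ_ne_zero, if_false, if_true, Nat.add_sub_cancel, mul_zero,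
        zero_mul, add_zero, Nat.zero_lt_succ, reduceIte]
      exact Finset.sum_congr rfl fun k _ => by ring


lemma moment_eq_cmat (μ : Measure ℝ) [IsProbabilityMeasure μ]
    (hmom : ∀ n : ℕ, Integrable (fun x => x ^ n) μ)
    (P : ℕ → Polynomial ℝ) (b g : ℕ → ℝ) (hP : IsMOPS μ P b g) :
    ∀ n, ∫ x, x ^ n ∂μ = cmat b g n 0 := by
  obtain ⟨h0, hmon, hdeg, hr0, hr, horth⟩ := hP
  intro n
  have hexp := pow_expansion P b g h0 hr0 hr n
  have hint : ∫ x, x ^ n ∂μ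
      = ∑ k ∈ Finset.range (n+1), ∫ x, cmat b g n k * (P k).eval x ∂μ := by
    rw [← integral_finset_sum _ (fun k _ => ((integrable_eval μ hmom (P k)).const_mul _))]
    simp_rw [← hexp]
  rw [hint]
  have hPk : ∀ k, k ≠ 0 → ∫ x, (P k).eval x ∂μ = 0 := by
    intro k hk
    have := horth k 0 hk
    simpa [h0] using this
  rw [Finset.sum_eq_single 0]
  · simp [h0]
  · intro k _ hk
    rw [MeasureTheory.integral_const_mul, hPk k hk, mul_zero]
  · intro h; exact absurd (Finset.mem_range.mpr (by omega)) h

lemma integrable_pow_mul_eval (μ : Measure ℝ)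
    (hmom : ∀ n : ℕ, Integrable (fun x => x ^ n) μ) (m : ℕ) (p : Polynomial ℝ) :
    Integrable (fun x => x ^ m * p.eval x) μ := by
  have h := integrable_eval μ hmom (X ^ m * p)
  simpa [eval_mul, eval_pow] using h

lemma integral_pow_mul (μ : Measure ℝ) [IsProbabilityMeasure μ]
    (hmom : ∀ n : ℕ, Integrable (fun x => x ^ n) μ) (b g : ℕ → ℝ)
    (hm : ∀ n, ∫ x, x ^ n ∂μ = cmat b g n 0)
    (S : ℕ → Polynomial ℝ) (hS0 : S 0 = 1)
    (hr0 : X * S 0 = S 1 + C (b 0) * S 0)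
    (hr : ∀ k, 1 ≤ k → X * S k = S (k + 1) + C (b k) * S k + C (g k) * S (k - 1)) :
    ∀ k n, ∫ x, x ^ n * (S k).eval x ∂μ
      = (∏ i ∈ Finset.range k, g (i+1)) * cmat b g n k := by
  have main : ∀ k, (∀ n, ∫ x, x ^ n * (S k).eval x ∂μ
      = (∏ i ∈ Finset.range k, g (i+1)) * cmat b g n k)
      ∧ (∀ n, ∫ x, x ^ n * (S (k+1)).eval x ∂μ
      = (∏ i ∈ Finset.range (k+1), g (i+1)) * cmat b g n (k+1)) := by
    intro k
    induction k with
    | zero =>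
      constructor
      · intro n
        simp only [hS0, eval_one, mul_one, Finset.range_zero, Finset.prod_empty]
        rw [hm n, one_mul]
      · intro n
        have hptw : (fun x => x ^ n * (S 1).eval x)
            = fun x => x ^ (n+1) - b 0 * x ^ n := by
          funext x
          have h := congrArg (fun p => Polynomial.eval x p) hr0
          simp only [eval_mul, eval_add, eval_X, eval_C, hS0, eval_one, mul_one] at h
          have h2 : (S 1).eval x = x - b 0 := by linarith
          rw [h2]; ring
        rw [hptw, integral_sub (hmom (n+1)) ((hmom n).const_mul _),
          MeasureTheory.integral_const_mul, hm (n+1), hm n]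
        rw [cmat_succ]
        simp only [Finset.prod_range_one]
        norm_num
    | succ k ih =>
      refine ⟨ih.2, ?_⟩
      intro n
      have hptw : (fun x => x ^ n * (S (k+2)).eval x)
          = fun x => (x ^ (n+1) * (S (k+1)).eval x
              - b (k+1) * (x ^ n * (S (k+1)).eval x))
              - g (k+1) * (x ^ n * (S k).eval x) := by
        funext x
        have h := congrArg (fun p => Polynomial.eval x p) (hr (k+1) (by omega))
        simp only [eval_mul, eval_add, eval_X, eval_C, Nat.add_sub_cancel] at h
        have h2 : (S (k+2)).eval x = x * (S (k+1)).eval x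
            - b (k+1) * (S (k+1)).eval x - g (k+1) * (S k).eval x := by linarith
        rw [h2]; ring
      have h1 : Integrable (fun x => x ^ (n+1) * (S (k+1)).eval x
          - b (k+1) * (x ^ n * (S (k+1)).eval x)) μ := by
        exact (integrable_pow_mul_eval μ hmom (n+1) (S (k+1))).sub
          ((integrable_pow_mul_eval μ hmom n (S (k+1))).const_mul _)
      have h2 : Integrable (fun x => g (k+1) * (x ^ n * (S k).eval x)) μ := by
        exact (integrable_pow_mul_eval μ hmom n (S k)).const_mul _
      rw [hptw, integral_sub h1 h2,
          integral_sub (integrable_pow_mul_eval μ hmom (n+1) (S (k+1)))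
            ((integrable_pow_mul_eval μ hmom n (S (k+1))).const_mul _),
          MeasureTheory.integral_const_mul, MeasureTheory.integral_const_mul,
          ih.2 (n+1), ih.2 n, ih.1 n]
      rw [show cmat b g (n+1) (k+1) = cmat b g n k + b (k+1) * cmat b g n (k+1)
            + g (k+2) * cmat b g n (k+2) by
          rw [cmat_succ, if_neg (Nat.succ_ne_zero k), Nat.add_sub_cancel]]
      simp only [Finset.prod_range_succ]
      ring
  exact fun k => (main k).1

noncomputable def jpoly (b g : ℕ → ℝ) : ℕ → Polynomial ℝ
  | 0 => 1
  | 1 => X - C (b 0)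
  | (k+2) => (X - C (b (k+1))) * jpoly b g (k+1) - C (g (k+1)) * jpoly b g k

lemma jpoly_rec0 (b g : ℕ → ℝ) :
    X * jpoly b g 0 = jpoly b g 1 + C (b 0) * jpoly b g 0 := by
  show X * 1 = (X - C (b 0)) + C (b 0) * 1
  ring

lemma jpoly_rec (b g : ℕ → ℝ) : ∀ k, 1 ≤ k →
    X * jpoly b g k = jpoly b g (k+1) + C (b k) * jpoly b g k + C (g k) * jpoly b g (k-1) := by
  intro k hk
  obtain ⟨k, rfl⟩ : ∃ k', k = k'+1 := ⟨k-1, by omega⟩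
  rw [Nat.add_sub_cancel]
  show X * jpoly b g (k+1)
      = ((X - C (b (k+1))) * jpoly b g (k+1) - C (g (k+1)) * jpoly b g k)
        + C (b (k+1)) * jpoly b g (k+1) + C (g (k+1)) * jpoly b g k
  ring

lemma jpoly_monic_deg (b g : ℕ → ℝ) :
    ∀ k, (jpoly b g k).Monic ∧ (jpoly b g k).natDegree = k := by
  have main : ∀ k, ((jpoly b g k).Monic ∧ (jpoly b g k).natDegree = k)
      ∧ ((jpoly b g (k+1)).Monic ∧ (jpoly b g (k+1)).natDegree = k+1) := by
    intro k
    induction k with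
    | zero =>
      refine ⟨⟨monic_one, natDegree_one⟩, ?_⟩
      show (X - C (b 0)).Monic ∧ (X - C (b 0)).natDegree = 1
      exact ⟨monic_X_sub_C _, natDegree_X_sub_C _⟩
    | succ k ih =>
      refine ⟨ih.2, ?_⟩
      have hf : ((X - C (b (k+1))) * jpoly b g (k+1)).Monic :=
        (monic_X_sub_C _).mul ih.2.1
      have hfd : ((X - C (b (k+1))) * jpoly b g (k+1)).natDegree = k + 2 := by
        rw [Monic.natDegree_mul (monic_X_sub_C _) ih.2.1, natDegree_X_sub_C, ih.2.2]
        omega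
      have hnd : (C (g (k+1)) * jpoly b g k).natDegree < ((X - C (b (k+1))) * jpoly b g (k+1)).natDegree := by
        rw [hfd]
        refine lt_of_le_of_lt (natDegree_mul_le.trans ?_) (show k + 1 < k + 2 by omega)
        simp [natDegree_C, ih.1.2]
      have hdlt : (C (g (k+1)) * jpoly b g k).degree
          < ((X - C (b (k+1))) * jpoly b g (k+1)).degree := by
        by_cases hz : C (g (k+1)) * jpoly b g k = 0
        · rw [hz, degree_zero, degree_eq_natDegree hf.ne_zero]
          exact WithBot.bot_lt_coe _
        · rw [degree_eq_natDegree hz, degree_eq_natDegree hf.ne_zero]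
          exact_mod_cast hnd
      have hmon2 : (jpoly b g (k+2)).Monic := by
        have : jpoly b g (k+2) = (X - C (b (k+1))) * jpoly b g (k+1) - C (g (k+1)) * jpoly b g k := rfl
        rw [this]
        exact hf.sub_of_left hdlt
      have hdeg2 : (jpoly b g (k+2)).natDegree = k + 2 := by
        have : jpoly b g (k+2) = (X - C (b (k+1))) * jpoly b g (k+1) - C (g (k+1)) * jpoly b g k := rfl
        rw [this, natDegree_sub_eq_left_of_natDegree_lt hnd, hfd]
      exact ⟨hmon2, hdeg2⟩
  exact fun k => (main k).1

lemma exists_expansion (P : ℕ → Polynomial ℝ) (hmon : ∀ n, (P n).Monic)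
    (hdeg : ∀ n, (P n).natDegree = n) :
    ∀ k (p : Polynomial ℝ), p.degree < (k : ℕ) →
      ∃ a : ℕ → ℝ, p = ∑ j ∈ Finset.range k, C (a j) * P j := by
  intro k
  induction k with
  | zero =>
    intro p hp
    refine ⟨fun _ => 0, ?_⟩
    have hp0 : p = 0 := by
      rw [← degree_eq_bot]
      exact Nat.WithBot.lt_zero_iff.mp (by exact_mod_cast hp)
    simp [hp0]
  | succ k ih =>
    intro p hp
    set c := p.coeff k with hc
    have hq : (p - C c * P k).degree < (k : ℕ) := by
      rw [degree_lt_iff_coeff_zero]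
      intro m hm
      have hm' : k ≤ m := by exact_mod_cast hm
      rw [coeff_sub, coeff_C_mul]
      rcases eq_or_lt_of_le hm' with heq | hlt
      · subst heq
        have h1 : (P k).coeff k = 1 := by
          have h2 := (hmon k).coeff_natDegree
          rwa [hdeg k] at h2
        rw [h1, mul_one, sub_self]
      · have h1 : p.coeff m = 0 := by
          apply coeff_eq_zero_of_degree_lt
          refine lt_of_lt_of_le hp ?_
          exact_mod_cast hlt
        have h2 : (P k).coeff m = 0 := by
          apply coeff_eq_zero_of_natDegree_lt
          rw [hdeg k]; exact hlt
        rw [h1, h2, mul_zero, sub_zero]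
    obtain ⟨a, ha⟩ := ih (p - C c * P k) hq
    refine ⟨Function.update a k c, ?_⟩
    rw [Finset.sum_range_succ, Function.update_self]
    have hs : ∑ j ∈ Finset.range k, C (Function.update a k c j) * P j
        = ∑ j ∈ Finset.range k, C (a j) * P j := by
      apply Finset.sum_congr rfl
      intro j hj
      rw [Function.update_of_ne (by simp at hj; omega)]
    rw [hs, ← ha]
    ring

lemma mops_poly_unique (μ : Measure ℝ) [IsProbabilityMeasure μ]
    (hmom : ∀ n : ℕ, Integrable (fun x => x ^ n) μ)
    (P : ℕ → Polynomial ℝ) (b g : ℕ → ℝ) (hP : IsMOPS μ P b g)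
    (hgpos : ∀ n, 1 ≤ n → 0 < g n)
    (b2 g2 : ℕ → ℝ) (hm2 : ∀ n, ∫ x, x ^ n ∂μ = cmat b2 g2 n 0) :
    ∀ k, P k = jpoly b2 g2 k := by
  have hmP := moment_eq_cmat μ hmom P b g hP
  obtain ⟨h0, hmon, hdeg, hr0, hr, horth⟩ := hP
  have eP := integral_pow_mul μ hmom b g hmP P h0 hr0 hr
  have eR := integral_pow_mul μ hmom b2 g2 hm2 (jpoly b2 g2) rfl
    (jpoly_rec0 b2 g2) (jpoly_rec b2 g2)
  have hPi2 : ∀ i, ∫ x, (P i).eval x * (P i).eval x ∂μ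
      = ∏ j ∈ Finset.range i, g (j+1) := by
    intro i
    have hptw : (fun x => (P i).eval x * (P i).eval x)
        = fun x => ∑ m ∈ Finset.range (i+1), (P i).coeff m * (x ^ m * (P i).eval x) := by
      funext x
      rw [show (P i).eval x * (P i).eval x
          = (∑ m ∈ Finset.range ((P i).natDegree + 1), (P i).coeff m * x ^ m) * (P i).eval x
          by rw [← eval_eq_sum_range]]
      rw [hdeg i, Finset.sum_mul]
      exact Finset.sum_congr rfl fun m _ => by ring
    rw [hptw, integral_finset_sum _
      (fun m _ => ((integrable_pow_mul_eval μ hmom m (P i)).const_mul _))]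
    rw [Finset.sum_eq_single i]
    · have h1 : (P i).coeff i = 1 := by
        have h2 := (hmon i).coeff_natDegree; rwa [hdeg i] at h2
      rw [MeasureTheory.integral_const_mul, eP i i, cmat_diag, h1]
      ring
    · intro m hm hmi
      rw [MeasureTheory.integral_const_mul, eP i m,
        cmat_eq_zero b g m i (by simp at hm; omega), mul_zero, mul_zero]
    · intro h; exact absurd (Finset.mem_range.mpr (by omega)) h
  intro k
  have hD : (P k - jpoly b2 g2 k).degree < (k : ℕ) := by
    rw [degree_lt_iff_coeff_zero]
    intro m hm
    have hm' : k ≤ m := by exact_mod_cast hm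
    rw [coeff_sub]
    rcases eq_or_lt_of_le hm' with heq | hlt
    · subst heq
      have h1 : (P k).coeff k = 1 := by
        have h2 := (hmon k).coeff_natDegree; rwa [hdeg k] at h2
      have h2 : (jpoly b2 g2 k).coeff k = 1 := by
        have h3 := (jpoly_monic_deg b2 g2 k).1.coeff_natDegree
        rwa [(jpoly_monic_deg b2 g2 k).2] at h3
      rw [h1, h2, sub_self]
    · rw [coeff_eq_zero_of_natDegree_lt (by rw [hdeg k]; exact hlt),
        coeff_eq_zero_of_natDegree_lt (by rw [(jpoly_monic_deg b2 g2 k).2]; exact hlt),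
        sub_zero]
  have hDint : ∀ n, n < k → ∫ x, x ^ n * (P k - jpoly b2 g2 k).eval x ∂μ = 0 := by
    intro n hn
    have hptw : (fun x => x ^ n * (P k - jpoly b2 g2 k).eval x)
        = fun x => x ^ n * (P k).eval x - x ^ n * (jpoly b2 g2 k).eval x := by
      funext x; rw [eval_sub]; ring
    rw [hptw, integral_sub (integrable_pow_mul_eval μ hmom n (P k))
        (integrable_pow_mul_eval μ hmom n (jpoly b2 g2 k)),
      eP k n, eR k n, cmat_eq_zero b g n k hn, cmat_eq_zero b2 g2 n k hn,
      mul_zero, mul_zero, sub_zero]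
  obtain ⟨a, ha⟩ := exists_expansion P hmon hdeg k _ hD
  have hai : ∀ i ∈ Finset.range k, a i = 0 := by
    intro i hi
    have hik : i < k := Finset.mem_range.mp hi
    have h2 : ∫ x, (P k - jpoly b2 g2 k).eval x * (P i).eval x ∂μ = 0 := by
      have hptw : (fun x => (P k - jpoly b2 g2 k).eval x * (P i).eval x)
          = fun x => ∑ m ∈ Finset.range (i+1),
              (P i).coeff m * (x ^ m * (P k - jpoly b2 g2 k).eval x) := by
        funext x
        rw [show (P i).eval x
            = ∑ m ∈ Finset.range ((P i).natDegree + 1), (P i).coeff m * x ^ m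
            from eval_eq_sum_range x]
        rw [hdeg i, Finset.mul_sum]
        exact Finset.sum_congr rfl fun m _ => by ring
      rw [hptw, integral_finset_sum _
        (fun m _ => ((integrable_pow_mul_eval μ hmom m _).const_mul _))]
      apply Finset.sum_eq_zero
      intro m hm
      rw [MeasureTheory.integral_const_mul, hDint m (by simp at hm; omega), mul_zero]
    have h1 : ∫ x, (P k - jpoly b2 g2 k).eval x * (P i).eval x ∂μ
        = a i * ∏ j ∈ Finset.range i, g (j+1) := by
      have hptw : (fun x => (P k - jpoly b2 g2 k).eval x * (P i).eval x)
          = fun x => ∑ j ∈ Finset.range k, a j * ((P j).eval x * (P i).eval x) := by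
        funext x
        rw [show (P k - jpoly b2 g2 k).eval x = ∑ j ∈ Finset.range k, a j * (P j).eval x
            by rw [ha]; simp [eval_finset_sum]]
        rw [Finset.sum_mul]
        exact Finset.sum_congr rfl fun m _ => by ring
      have hintj : ∀ j, Integrable (fun x => (P j).eval x * (P i).eval x) μ := by
        intro j
        simpa [eval_mul] using integrable_eval μ hmom (P j * P i)
      rw [hptw, integral_finset_sum _ (fun j _ => (hintj j).const_mul _)]
      rw [Finset.sum_eq_single i]
      · rw [MeasureTheory.integral_const_mul, hPi2 i]
      · intro j hj hji
        rw [MeasureTheory.integral_const_mul, horth j i hji, mul_zero]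
      · intro h; exact absurd hi h
    have hprod : 0 < ∏ j ∈ Finset.range i, g (j+1) :=
      Finset.prod_pos fun j _ => hgpos (j+1) (by omega)
    have := h1.symm.trans h2
    exact (mul_eq_zero.mp this).resolve_right (ne_of_gt hprod)
  have hzero : P k - jpoly b2 g2 k = 0 := by
    rw [ha]
    apply Finset.sum_eq_zero
    intro j hj
    rw [hai j hj]
    simp
  exact sub_eq_zero.mp hzero

lemma param_eq (P : ℕ → Polynomial ℝ) (hmon : ∀ n, (P n).Monic)
    (hdeg : ∀ n, (P n).natDegree = n) (u v u' v' : ℝ) (n : ℕ) (hn : 1 ≤ n)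
    (h : P (n+1) + C u * P n + C v * P (n-1) = P (n+1) + C u' * P n + C v' * P (n-1)) :
    u = u' ∧ v = v' := by
  have h2 : C (u - u') * P n = C (v' - v) * P (n-1) := by
    rw [map_sub, map_sub]
    linear_combination h
  have hu : u = u' := by
    have hc := congrArg (fun p => Polynomial.coeff p n) h2
    simp only [coeff_C_mul] at hc
    rw [show (P (n-1)).coeff n = 0 from
      coeff_eq_zero_of_natDegree_lt (by rw [hdeg (n-1)]; omega)] at hc
    have h1 : (P n).coeff n = 1 := by
      have h3 := (hmon n).coeff_natDegree; rwa [hdeg n] at h3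
    rw [h1, mul_one, mul_zero] at hc
    linarith
  refine ⟨hu, ?_⟩
  rw [hu, sub_self, map_zero, zero_mul] at h2
  rcases mul_eq_zero.mp h2.symm with h3 | h3
  · have := C_eq_zero.mp h3
    linarith
  · exact absurd h3 (hmon (n-1)).ne_zero


/-- for probability measures `μ, ν` on `ℝ` with finite moments and monic
orthogonal polynomial systems with Jacobi parameters `(β, γ)` and `(β', γ')` (all `γ`'s
positive), the Jacobi parameters of `μ` are those of `ν` with `0` and `1` prepended iff
`M^μ(z) · (1 − z² · M^ν(z)) = 1` in `ℝ[[z]]`. -/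
theorem jacobi_shift_iff_moment_series (μ ν : Measure ℝ)
    [IsProbabilityMeasure μ] [IsProbabilityMeasure ν]
    (hμmom : ∀ n : ℕ, Integrable (fun x => x ^ n) μ)
    (hνmom : ∀ n : ℕ, Integrable (fun x => x ^ n) ν)
    (P Q : ℕ → Polynomial ℝ) (β γ β' γ' : ℕ → ℝ)
    (hP : IsMOPS μ P β γ) (hQ : IsMOPS ν Q β' γ')
    (hγpos : ∀ n, 1 ≤ n → 0 < γ n) (hγ'pos : ∀ n, 1 ≤ n → 0 < γ' n) :
    (β 0 = 0 ∧ γ 1 = 1 ∧ (∀ n, 1 ≤ n → β n = β' (n - 1)) ∧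
        (∀ n, 2 ≤ n → γ n = γ' (n - 1)))
      ↔ momentSeries μ * (1 - PowerSeries.X ^ 2 * momentSeries ν) = 1 := by
  have hMν : momentSeries ν = PowerSeries.mk (fun n => cmat β' γ' n 0) := by
    ext n
    simp only [momentSeries, PowerSeries.coeff_mk]
    exact moment_eq_cmat ν hνmom Q β' γ' hQ n
  constructor
  · rintro ⟨hb0, hg1, hb, hg⟩
    have hMμ : momentSeries μ = PowerSeries.mk (fun n => cmat β γ n 0) := by
      ext n
      simp only [momentSeries, PowerSeries.coeff_mk]
      exact moment_eq_cmat μ hμmom P β γ hP n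
    rw [hMμ, hMν]
    refine forward_series β γ β' γ' hb0 hg1 (fun n => ?_) (fun n => ?_)
    · simpa using hb (n+1) (by omega)
    · simpa using hg (n+2) (by omega)
  · intro hps
    set b2 : ℕ → ℝ := fun n => if n = 0 then 0 else β' (n-1) with hb2
    set g2 : ℕ → ℝ := fun n => if n ≤ 1 then 1 else γ' (n-1) with hg2
    have hfw : PowerSeries.mk (fun n => cmat b2 g2 n 0)
        * (1 - PowerSeries.X ^ 2 * momentSeries ν) = 1 := by
      rw [hMν]
      refine forward_series b2 g2 β' γ' (by simp [hb2]) (by simp [hg2])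
        (fun n => ?_) (fun n => ?_)
      · simp [hb2]
      · simp only [hg2]
        rw [if_neg (by omega)]
        congr 1
    have hMμ2 : momentSeries μ = PowerSeries.mk (fun n => cmat b2 g2 n 0) := by
      calc momentSeries μ
          = momentSeries μ * (PowerSeries.mk (fun n => cmat b2 g2 n 0)
            * (1 - PowerSeries.X ^ 2 * momentSeries ν)) := by rw [hfw, mul_one]
        _ = PowerSeries.mk (fun n => cmat b2 g2 n 0)
            * (momentSeries μ * (1 - PowerSeries.X ^ 2 * momentSeries ν)) := by ring
        _ = PowerSeries.mk (fun n => cmat b2 g2 n 0) := by rw [hps, mul_one]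
    have hm2 : ∀ n, ∫ x, x ^ n ∂μ = cmat b2 g2 n 0 := by
      intro n
      have h := congrArg (PowerSeries.coeff n) hMμ2
      simpa [momentSeries] using h
    have hPeq := mops_poly_unique μ hμmom P β γ hP hγpos b2 g2 hm2
    obtain ⟨h0, hmon, hdeg, hr0, hr, horth⟩ := hP
    have hpar : ∀ n, 1 ≤ n → β n = b2 n ∧ γ n = g2 n := by
      intro n hn
      apply param_eq P hmon hdeg _ _ _ _ n hn
      have h1 := hr n hn
      have h2 := jpoly_rec b2 g2 n hn
      rw [← hPeq n, ← hPeq (n+1), ← hPeq (n-1)] at h2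
      rw [← h1, ← h2]
    have hb0 : β 0 = 0 := by
      have h1 := hr0
      have h2 := jpoly_rec0 b2 g2
      rw [← hPeq 0, ← hPeq 1] at h2
      rw [h1] at h2
      have h3 : C (β 0) * P 0 = C (b2 0) * P 0 := by
        exact add_left_cancel h2
      rw [h0, mul_one, mul_one] at h3
      have h4 : β 0 = b2 0 := C_inj.mp h3
      simpa [hb2] using h4
    refine ⟨hb0, ?_, ?_, ?_⟩
    · have := (hpar 1 le_rfl).2
      simpa [hg2] using this
    · intro n hn
      have := (hpar n hn).1
      rw [this]
      simp only [hb2]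
      rw [if_neg (by omega)]
    · intro n hn
      have := (hpar n (by omega)).2
      rw [this]
      simp only [hg2]
      rw [if_neg (by omega)]
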